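/- For every n ≥ 2, the representation space Hom(H₃(ℤ), U(n)) of the integer Heisenberg group in the unitary group U(n) is a disconnected topological space (it is not connected). -/

import Mathlib

/-- The representation space `Hom(Γ,G)`: group homomorphisms with the topology of pointwise
convergence, i.e. the topology induced from the product space `Γ → G`. -/
instance repSpaceTopology {Γ G : Type*} [Group Γ] [Group G] [TopologicalSpace G] :
    TopologicalSpace (Γ →* G) :=
  TopologicalSpace.induced (fun ρ => (ρ : Γ → G)) Pi.topologicalSpace

/-- The integer Heisenberg group `H₃(ℤ)`: triples `(a,b,c)` of integers with multiplication
`(a,b,c)·(a',b',c') = (a+a', b+b', c+c'+a·b')`, i.e. upper-triangular 3×3 integer matrices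
with ones on the diagonal. -/
@[ext]
structure Heisenberg where
  a : ℤ
  b : ℤ
  c : ℤ

namespace Heisenberg

instance : Mul Heisenberg := ⟨fun x y => ⟨x.a + y.a, x.b + y.b, x.c + y.c + x.a * y.b⟩⟩
instance : One Heisenberg := ⟨⟨0, 0, 0⟩⟩
instance : Inv Heisenberg := ⟨fun x => ⟨-x.a, -x.b, x.a * x.b - x.c⟩⟩

@[simp] lemma mul_a (x y : Heisenberg) : (x * y).a = x.a + y.a := rfl
@[simp] lemma mul_b (x y : Heisenberg) : (x * y).b = x.b + y.b := rfl
@[simp] lemma mul_c (x y : Heisenberg) : (x * y).c = x.c + y.c + x.a * y.b := rfl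
@[simp] lemma one_a : (1 : Heisenberg).a = 0 := rfl
@[simp] lemma one_b : (1 : Heisenberg).b = 0 := rfl
@[simp] lemma one_c : (1 : Heisenberg).c = 0 := rfl
@[simp] lemma inv_a (x : Heisenberg) : x⁻¹.a = -x.a := rfl
@[simp] lemma inv_b (x : Heisenberg) : x⁻¹.b = -x.b := rfl
@[simp] lemma inv_c (x : Heisenberg) : x⁻¹.c = x.a * x.b - x.c := rfl

instance : Group Heisenberg where
  mul_assoc x y z := by ext <;> simp <;> ring
  one_mul x := by ext <;> simp
  mul_one x := by ext <;> simp
  inv_mul_cancel x := by ext <;> simp [mul_comm]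

end Heisenberg

/-- For every `n ≥ 2`, the representation space `Hom(H₃(ℤ), U(n))` of the integer Heisenberg
group in the unitary group `U(n)` is disconnected. -/

lemma heis_zpow {G : Type*} [Group G] {x y z : G}
    (hzx : Commute z x) (hzy : Commute z y) (hxy : x * y = y * x * z) :
    ∀ a b : ℤ, x ^ a * y ^ b = y ^ b * x ^ a * z ^ (a * b) := by
  have hxyb : ∀ b : ℤ, x * y ^ b = y ^ b * x * z ^ b := by
    intro b
    have h1 : SemiconjBy x y (y * z) := by
      show x * y = (y * z) * x
      rw [hxy, mul_assoc, mul_assoc, hzx.eq]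
    have h2 := h1.zpow_right b
    rw [hzy.symm.mul_zpow] at h2
    rw [h2.eq, mul_assoc, (hzx.zpow_left b).eq, ← mul_assoc]
  have hxyb' : ∀ b : ℤ, x⁻¹ * y ^ b = y ^ b * x⁻¹ * z ^ (-b) := by
    intro b
    have h := hxyb b
    have : y ^ b * x = x * y ^ b * z ^ (-b) := by
      rw [h]; group
    calc x⁻¹ * y ^ b = x⁻¹ * (y ^ b * x) * x⁻¹ := by group
      _ = x⁻¹ * (x * y ^ b * z ^ (-b)) * x⁻¹ := by rw [this]
      _ = y ^ b * (z ^ (-b) * x⁻¹) := by group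
      _ = y ^ b * x⁻¹ * z ^ (-b) := by rw [(hzx.zpow_left (-b)).inv_right.eq, mul_assoc]
  intro a
  induction a using Int.induction_on with
  | zero => intro b; simp
  | succ k ih =>
    intro b
    calc x ^ ((k : ℤ) + 1) * y ^ b = x ^ (k : ℤ) * (x * y ^ b) := by
          rw [zpow_add_one, mul_assoc]
      _ = x ^ (k : ℤ) * y ^ b * (x * z ^ b) := by rw [hxyb b]; simp only [mul_assoc]
      _ = y ^ b * x ^ (k : ℤ) * z ^ ((k : ℤ) * b) * (x * z ^ b) := by rw [ih b]
      _ = y ^ b * x ^ (k : ℤ) * (z ^ ((k : ℤ) * b) * x) * z ^ b := by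
          simp only [mul_assoc]
      _ = y ^ b * x ^ (k : ℤ) * (x * z ^ ((k : ℤ) * b)) * z ^ b := by
          rw [(hzx.zpow_left _).eq]
      _ = y ^ b * (x ^ (k : ℤ) * x) * (z ^ ((k : ℤ) * b) * z ^ b) := by
          simp only [mul_assoc]
      _ = y ^ b * x ^ ((k : ℤ) + 1) * z ^ (((k : ℤ) + 1) * b) := by
          rw [← zpow_add_one, ← zpow_add]; ring_nf
  | pred k ih =>
    intro b
    calc x ^ (-(k : ℤ) - 1) * y ^ b = x ^ (-(k : ℤ)) * (x⁻¹ * y ^ b) := by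
          rw [zpow_sub_one, mul_assoc]
      _ = x ^ (-(k : ℤ)) * y ^ b * (x⁻¹ * z ^ (-b)) := by
          rw [hxyb' b]; simp only [mul_assoc]
      _ = y ^ b * x ^ (-(k : ℤ)) * z ^ (-(k : ℤ) * b) * (x⁻¹ * z ^ (-b)) := by rw [ih b]
      _ = y ^ b * x ^ (-(k : ℤ)) * (z ^ (-(k : ℤ) * b) * x⁻¹) * z ^ (-b) := by
          simp only [mul_assoc]
      _ = y ^ b * x ^ (-(k : ℤ)) * (x⁻¹ * z ^ (-(k : ℤ) * b)) * z ^ (-b) := by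
          rw [(hzx.zpow_left _).inv_right.eq]
      _ = y ^ b * (x ^ (-(k : ℤ)) * x⁻¹) * (z ^ (-(k : ℤ) * b) * z ^ (-b)) := by
          simp only [mul_assoc]
      _ = y ^ b * x ^ (-(k : ℤ) - 1) * z ^ ((-(k : ℤ) - 1) * b) := by
          rw [← zpow_sub_one, ← zpow_add]; ring_nf

open Matrix

lemma heis_hom_mul {G : Type*} [Group G] {x y z : G} (hzx : Commute z x) (hzy : Commute z y)
    (hxy : x * y = y * x * z)
    (hzpow : ∀ a b : ℤ, x ^ a * y ^ b = y ^ b * x ^ a * z ^ (a * b))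
    (a b c a' b' c' : ℤ) :
    (y ^ b * x ^ a * z ^ c) * (y ^ b' * x ^ a' * z ^ c') =
      y ^ (b + b') * x ^ (a + a') * z ^ ((c + c') + a * b') := by
  have h1 := hzpow a b'
  calc (y ^ b * x ^ a * z ^ c) * (y ^ b' * x ^ a' * z ^ c')
      = y ^ b * x ^ a * (z ^ c * y ^ b') * (x ^ a' * z ^ c') := by simp only [mul_assoc]
    _ = y ^ b * x ^ a * (y ^ b' * z ^ c) * (x ^ a' * z ^ c') := by
        rw [(hzy.zpow_zpow c b').eq]
    _ = y ^ b * (x ^ a * y ^ b') * ((z ^ c * x ^ a') * z ^ c') := by simp only [mul_assoc]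
    _ = y ^ b * (y ^ b' * x ^ a * z ^ (a * b')) * ((x ^ a' * z ^ c) * z ^ c') := by
        rw [h1, (hzx.zpow_zpow c a').eq]
    _ = (y ^ b * y ^ b') * (x ^ a * (z ^ (a * b') * x ^ a')) * (z ^ c * z ^ c') := by
        simp only [mul_assoc]
    _ = (y ^ b * y ^ b') * (x ^ a * (x ^ a' * z ^ (a * b'))) * (z ^ c * z ^ c') := by
        rw [(hzx.zpow_zpow (a * b') a').eq]
    _ = y ^ (b + b') * x ^ (a + a') * (z ^ (a * b') * (z ^ c * z ^ c')) := by
        group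
    _ = y ^ (b + b') * x ^ (a + a') * z ^ ((c + c') + a * b') := by
        group

open Matrix Polynomial

lemma exists_eigenvector_of_root {n : ℕ} {A : Matrix (Fin n) (Fin n) ℂ} {μ : ℂ}
    (h : μ ∈ A.charpoly.roots) : ∃ w : Fin n → ℂ, w ≠ 0 ∧ A.mulVec w = μ • w := by
  classical
  have hroot : A.charpoly.eval μ = 0 := by
    exact (Polynomial.mem_roots (A.charpoly_monic.ne_zero)).mp h
  have hdet : (μ • (1 : Matrix (Fin n) (Fin n) ℂ) - A).det = 0 := by
    have hmap : (charmatrix A).map (Polynomial.evalRingHom μ) =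
        μ • (1 : Matrix (Fin n) (Fin n) ℂ) - A := by
      ext i j
      by_cases hij : i = j
      · subst hij
        simp [charmatrix_apply_eq, Matrix.map_apply, Matrix.sub_apply, Matrix.one_apply]
      · simp [charmatrix_apply_ne _ _ _ hij, Matrix.map_apply, Matrix.sub_apply,
          Matrix.one_apply_ne hij]
    have hdet2 := RingHom.map_det (Polynomial.evalRingHom μ) (charmatrix A)
    rw [RingHom.mapMatrix_apply, hmap] at hdet2
    rw [← hdet2]
    simpa [Matrix.charpoly] using hroot
  obtain ⟨w, hw0, hw⟩ := Matrix.exists_mulVec_eq_zero_iff.mpr hdet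
  refine ⟨w, hw0, ?_⟩
  have h1 : (μ • (1 : Matrix (Fin n) (Fin n) ℂ)).mulVec w - A.mulVec w = 0 := by
    rw [← Matrix.sub_mulVec, hw]
  have h2 : (μ • (1 : Matrix (Fin n) (Fin n) ℂ)).mulVec w = μ • w := by
    rw [Matrix.smul_mulVec, Matrix.one_mulVec]
  rw [h2] at h1
  exact (sub_eq_zero.mp h1).symm

open Matrix Module

lemma eig_pow_factorial_eq_one {n : ℕ} {A U V : Matrix (Fin n) (Fin n) ℂ}
    (hU : IsUnit U) (hV : IsUnit V) (hAU : A * U = U * A) (hAV : A * V = V * A)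
    (hrel : U * V = A * (V * U)) {μ : ℂ} {w : Fin n → ℂ} (hw : w ≠ 0)
    (hAw : A.mulVec w = μ • w) : μ ^ n.factorial = 1 := by
  classical
  set e := Matrix.toLinAlgEquiv' (R := ℂ) (n := Fin n) with he
  set f := e A with hfdef
  set u := e U with hudef
  set v := e V with hvdef
  have hfapp : ∀ x, f x = A.mulVec x := fun x => rfl
  set E := Module.End.eigenspace f μ with hE
  have hwE : w ∈ E := by
    rw [Module.End.mem_eigenspace_iff]
    rw [hfapp, hAw]
  have hcomm : ∀ (M : Matrix (Fin n) (Fin n) ℂ), A * M = M * A →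
      ∀ x ∈ E, (e M) x ∈ E := by
    intro M hM x hx
    rw [Module.End.mem_eigenspace_iff] at hx ⊢
    have h1 : f * (e M) = (e M) * f := by
      rw [hfdef, ← _root_.map_mul, ← _root_.map_mul, hM]
    have h2 : f ((e M) x) = (e M) (f x) :=
      congrFun (congrArg DFunLike.coe h1) x
    rw [h2, hx, _root_.map_smul]
  have hu : ∀ x ∈ E, u x ∈ E := hcomm U hAU
  have hv' : ∀ x ∈ E, v x ∈ E := hcomm V hAV
  have hf : ∀ x ∈ E, f x ∈ E := by
    intro x hx
    rw [Module.End.mem_eigenspace_iff] at hx ⊢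
    rw [hx, _root_.map_smul, hx]
  set u' := u.restrict hu with hu'def
  set v' := v.restrict hv' with hv'def
  set f' := f.restrict hf with hf'def
  have hf'eq : f' = μ • (1 : Module.End ℂ E) := by
    apply LinearMap.ext; intro x
    apply Subtype.ext
    have hx := (Module.End.mem_eigenspace_iff).mp x.2
    simp only [hf'def, LinearMap.restrict_coe_apply]
    simpa using hx
  have hrel' : u' * v' = f' * (v' * u') := by
    apply LinearMap.ext; intro x
    apply Subtype.ext
    have h2 : u * v = f * (v * u) := by
      rw [hudef, hvdef, hfdef, ← _root_.map_mul, ← _root_.map_mul, ← _root_.map_mul, hrel]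
    have h1 := congrFun (congrArg DFunLike.coe h2) (x : Fin n → ℂ)
    simp only [Module.End.mul_apply] at h1
    simp only [hu'def, hv'def, hf'def, Module.End.mul_apply, LinearMap.restrict_coe_apply]
    exact h1
  have hdet := congrArg LinearMap.det hrel'
  rw [_root_.map_mul, _root_.map_mul, _root_.map_mul, hf'eq] at hdet
  have hdetf : LinearMap.det (μ • (1 : Module.End ℂ E)) = μ ^ (finrank ℂ E) := by
    rw [LinearMap.det_smul]
    simp
  have hdu : LinearMap.det u' ≠ 0 := by
    intro h0
    have hk := LinearMap.bot_lt_ker_of_det_eq_zero h0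
    have hinj : Function.Injective u :=
      LinearMap.ker_eq_bot.mp ((LinearMap.isUnit_iff_ker_eq_bot u).mp (hU.map e))
    have hker : LinearMap.ker u' = ⊥ := by
      rw [LinearMap.ker_eq_bot]
      intro a b hab
      exact Subtype.ext (hinj (congrArg Subtype.val hab))
    rw [hker] at hk
    exact lt_irrefl _ hk
  have hdv : LinearMap.det v' ≠ 0 := by
    intro h0
    have hk := LinearMap.bot_lt_ker_of_det_eq_zero h0
    have hinj : Function.Injective v :=
      LinearMap.ker_eq_bot.mp ((LinearMap.isUnit_iff_ker_eq_bot v).mp (hV.map e))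
    have hker : LinearMap.ker v' = ⊥ := by
      rw [LinearMap.ker_eq_bot]
      intro a b hab
      exact Subtype.ext (hinj (congrArg Subtype.val hab))
    rw [hker] at hk
    exact lt_irrefl _ hk
  rw [hdetf] at hdet
  -- hdet : det u' * det v' = μ ^ d * (det v' * det u')
  have hmud : μ ^ (finrank ℂ E) = 1 := by
    have hX : LinearMap.det v' * LinearMap.det u' ≠ 0 := mul_ne_zero hdv hdu
    have : μ ^ (finrank ℂ E) * (LinearMap.det v' * LinearMap.det u') =
        1 * (LinearMap.det v' * LinearMap.det u') := by
      rw [one_mul, ← hdet]; ring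
    exact mul_right_cancel₀ hX this
  haveI : Nontrivial E :=
    ⟨⟨⟨w, hwE⟩, 0, fun h => hw (by simpa using congrArg Subtype.val h)⟩⟩
  have hd1 : 0 < finrank ℂ E := Module.finrank_pos_iff.mpr this
  have hdn : finrank ℂ E ≤ n := by
    have h2 := Submodule.finrank_le E
    rwa [Module.finrank_fintype_fun_eq_card, Fintype.card_fin] at h2
  obtain ⟨c, hc⟩ := Nat.dvd_factorial hd1 hdn
  rw [hc, pow_mul, hmud, one_pow]

open Matrix

lemma exists_unitaries (n : ℕ) (hn : 2 ≤ n) :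
    ∃ x y z : Matrix.unitaryGroup (Fin n) ℂ,
      Commute z x ∧ Commute z y ∧ x * y = y * x * z ∧
        Matrix.trace ((z : Matrix (Fin n) (Fin n) ℂ)) = (n : ℂ) - 4 := by
  classical
  set i0 : Fin n := ⟨0, by omega⟩ with hi0
  set i1 : Fin n := ⟨1, by omega⟩ with hi1
  have hne : i0 ≠ i1 := by simp [hi0, hi1, Fin.ext_iff]
  set τ : Equiv.Perm (Fin n) := Equiv.swap i0 i1 with hτ
  have hττ : ∀ i, τ (τ i) = i := fun i => Equiv.swap_apply_self _ _ i
  set P : Matrix (Fin n) (Fin n) ℂ := (1 : Matrix (Fin n) (Fin n) ℂ).submatrix τ id with hP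
  set dy : Fin n → ℂ := fun i => if i = i1 then -1 else 1 with hdy
  set dz : Fin n → ℂ := fun i => (if i = i0 then -1 else 1) * (if i = i1 then -1 else 1) with hdz
  set Dy : Matrix (Fin n) (Fin n) ℂ := diagonal dy with hDy
  set Dz : Matrix (Fin n) (Fin n) ℂ := diagonal dz with hDz
  have P_apply : ∀ i j, P i j = if τ i = j then 1 else 0 := by
    intro i j
    simp [hP, Matrix.submatrix_apply, Matrix.one_apply]
  have P_mul : ∀ M : Matrix (Fin n) (Fin n) ℂ, P * M = M.submatrix τ id := by
    intro M
    ext i j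
    simp only [Matrix.mul_apply, P_apply, Matrix.submatrix_apply, id_eq, ite_mul, one_mul,
      zero_mul]
    rw [Finset.sum_ite_eq Finset.univ (τ i) (fun k => M k j)]
    simp
  have mul_P : ∀ M : Matrix (Fin n) (Fin n) ℂ, M * P = M.submatrix id τ := by
    intro M
    ext i j
    simp only [Matrix.mul_apply, P_apply, Matrix.submatrix_apply, id_eq, mul_ite, mul_one,
      mul_zero]
    have hiff : ∀ k : Fin n, (τ k = j) ↔ (k = τ j) := by
      intro k
      constructor
      · intro h; rw [← h, hττ]
      · intro h; rw [h, hττ]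
    rw [Finset.sum_congr rfl (fun k _ => by rw [if_congr (hiff k) rfl rfl])]
    rw [Finset.sum_ite_eq' Finset.univ (τ j) (fun k => M i k)]
    simp
  have P_mul_P : P * P = 1 := by
    rw [P_mul, hP]
    ext i j
    simp [Matrix.submatrix_apply, Matrix.one_apply, hττ]
  have star_P : star P = P := by
    ext i j
    simp only [Matrix.star_apply, P_apply]
    have hiff : (τ j = i) ↔ (τ i = j) := by
      constructor
      · intro h; rw [← h, hττ]
      · intro h; rw [← h, hττ]
    rw [if_congr hiff rfl rfl]
    split <;> simp
  have P_unitary : P ∈ Matrix.unitaryGroup (Fin n) ℂ := by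
    rw [Matrix.mem_unitaryGroup_iff, star_P, P_mul_P]
  have dy_sq : ∀ i, dy i * dy i = 1 := by
    intro i; simp only [hdy]; split <;> norm_num
  have dz_sq : ∀ i, dz i * dz i = 1 := by
    intro i; simp only [hdz]; split <;> split <;> norm_num
  have star_dy : ∀ i, star (dy i) = dy i := by
    intro i; simp only [hdy]; split <;> simp
  have star_dz : ∀ i, star (dz i) = dz i := by
    intro i; simp only [hdz]; split <;> split <;> simp
  have Dy_unitary : Dy ∈ Matrix.unitaryGroup (Fin n) ℂ := by
    rw [Matrix.mem_unitaryGroup_iff, hDy, Matrix.star_eq_conjTranspose,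
      Matrix.diagonal_conjTranspose, Matrix.diagonal_mul_diagonal]
    ext i j
    rcases eq_or_ne i j with rfl | hij
    · simp only [Matrix.diagonal_apply_eq, Pi.mul_apply, Pi.star_apply, Matrix.one_apply_eq]
      rw [star_dy i, dy_sq i]
    · simp [Matrix.diagonal_apply_ne _ hij, Matrix.one_apply_ne hij]
  have Dz_unitary : Dz ∈ Matrix.unitaryGroup (Fin n) ℂ := by
    rw [Matrix.mem_unitaryGroup_iff, hDz, Matrix.star_eq_conjTranspose,
      Matrix.diagonal_conjTranspose, Matrix.diagonal_mul_diagonal]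
    ext i j
    rcases eq_or_ne i j with rfl | hij
    · simp only [Matrix.diagonal_apply_eq, Pi.mul_apply, Pi.star_apply, Matrix.one_apply_eq]
      rw [star_dz i, dz_sq i]
    · simp [Matrix.diagonal_apply_ne _ hij, Matrix.one_apply_ne hij]
  have dz_swap : ∀ i, dz (τ i) = dz i := by
    intro i
    by_cases h0 : i = i0
    · subst h0
      rw [show τ i0 = i1 from Equiv.swap_apply_left _ _]
      simp [hdz, hne, hne.symm]
    · by_cases h1 : i = i1
      · subst h1
        rw [show τ i1 = i0 from Equiv.swap_apply_right _ _]
        simp [hdz, hne, hne.symm]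
      · rw [show τ i = i from Equiv.swap_apply_of_ne_of_ne h0 h1]
  have dy_swap : ∀ i, dy (τ i) = dy i * dz (τ i) := by
    intro i
    by_cases h0 : i = i0
    · subst h0
      rw [show τ i0 = i1 from Equiv.swap_apply_left _ _]
      simp [hdy, hdz, hne, hne.symm]
    · by_cases h1 : i = i1
      · subst h1
        rw [show τ i1 = i0 from Equiv.swap_apply_right _ _]
        simp [hdy, hdz, hne, hne.symm]
      · rw [show τ i = i from Equiv.swap_apply_of_ne_of_ne h0 h1]
        simp [hdy, hdz, h0, h1]
  have P_Dz_comm : P * Dz = Dz * P := by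
    rw [P_mul, hDz]
    ext i j
    rcases eq_or_ne (τ i) j with rfl | hij
    · simp only [Matrix.submatrix_apply, id_eq, Matrix.diagonal_apply_eq, Matrix.diagonal_mul]
      rw [dz_swap i]
      rw [P_apply]
      simp
    · simp only [Matrix.submatrix_apply, id_eq, Matrix.diagonal_apply_ne _ hij,
        Matrix.diagonal_mul, P_apply, if_neg hij, mul_zero]
  have key_rel : P * Dy = Dy * P * Dz := by
    rw [P_mul, hDy]
    ext i j
    rcases eq_or_ne (τ i) j with rfl | hij
    · simp only [Matrix.submatrix_apply, id_eq, Matrix.diagonal_apply_eq]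
      have h1 : (Dy * P * Dz) i (τ i) = dy i * P i (τ i) * dz (τ i) := by
        rw [hDy, hDz, Matrix.mul_diagonal, Matrix.diagonal_mul]
      rw [h1, P_apply, if_pos rfl, mul_one, dy_swap i]
    · have h1 : (Dy * P * Dz) i j = dy i * P i j * dz j := by
        rw [hDy, hDz, Matrix.mul_diagonal, Matrix.diagonal_mul]
      simp only [Matrix.submatrix_apply, id_eq, Matrix.diagonal_apply_ne _ hij, h1, P_apply,
        if_neg hij, mul_zero, zero_mul]
      rw [← hDy, h1, P_apply, if_neg hij]; ring
  have trace_Dz : Matrix.trace Dz = (n : ℂ) - 4 := by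
    rw [hDz, Matrix.trace_diagonal]
    have : ∀ i, dz i = 1 - 2 * (if i = i0 then (1 : ℂ) else 0) - 2 * (if i = i1 then (1 : ℂ) else 0) := by
      intro i
      by_cases h0 : i = i0
      · subst h0
        simp [hdz, hne, hne.symm]
        norm_num
      · by_cases h1 : i = i1
        · subst h1
          simp [hdz, hne, hne.symm, h0]
          norm_num
        · simp [hdz, h0, h1]
    rw [Finset.sum_congr rfl fun i _ => this i]
    simp only [Finset.sum_sub_distrib, Finset.sum_const, Finset.card_univ, Fintype.card_fin,
      nsmul_eq_mul, mul_one, ← Finset.mul_sum, Finset.sum_ite_eq' Finset.univ,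
      Finset.mem_univ, if_pos]
    ring
  refine ⟨⟨P, P_unitary⟩, ⟨Dy, Dy_unitary⟩, ⟨Dz, Dz_unitary⟩, ?_, ?_, ?_, trace_Dz⟩
  · exact Subtype.ext (by simpa using P_Dz_comm.symm)
  · refine Subtype.ext ?_
    show Dz * Dy = Dy * Dz
    ext i j
    rw [hDy, hDz, Matrix.diagonal_mul_diagonal, Matrix.diagonal_mul_diagonal]
    rcases eq_or_ne i j with rfl | hij
    · simp only [Matrix.diagonal_apply_eq]
      ring
    · simp [Matrix.diagonal_apply_ne _ hij]
  · exact Subtype.ext (by simpa using key_rel)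

theorem heisenberg_rep_space_disconnected_unitary (n : ℕ) (hn : 2 ≤ n) :
    ¬ ConnectedSpace (Heisenberg →* Matrix.unitaryGroup (Fin n) ℂ) := by
  classical
  intro hconn
  set x₀ : Heisenberg := ⟨1, 0, 0⟩ with hx₀
  set y₀ : Heisenberg := ⟨0, 1, 0⟩ with hy₀
  set z₀ : Heisenberg := ⟨0, 0, 1⟩ with hz₀
  have e1 : z₀ * x₀ = x₀ * z₀ := by ext <;> simp [hx₀, hz₀]
  have e2 : z₀ * y₀ = y₀ * z₀ := by ext <;> simp [hy₀, hz₀]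
  have e3 : x₀ * y₀ = z₀ * (y₀ * x₀) := by ext <;> simp [hx₀, hy₀, hz₀]
  set N := n.factorial with hNdef
  have hN : 0 < N := n.factorial_pos
  set S : Set ℂ := (fun f : Fin n → ℂ => ∑ i, f i) ''
      (Set.univ.pi fun _ : Fin n => ((Polynomial.nthRootsFinset N (1 : ℂ) : Finset ℂ) : Set ℂ))
    with hSdef
  have hSfin : S.Finite :=
    (Set.Finite.pi fun _ => (Polynomial.nthRootsFinset N (1 : ℂ)).finite_toSet).image _
  set g : (Heisenberg →* Matrix.unitaryGroup (Fin n) ℂ) → ℂ :=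
    fun ρ => Matrix.trace ((ρ z₀ : Matrix (Fin n) (Fin n) ℂ)) with hgdef
  have hcont : Continuous g := by
    have h1 : Continuous
        (fun ρ : (Heisenberg →* Matrix.unitaryGroup (Fin n) ℂ) =>
          (fun γ => ρ γ : Heisenberg → Matrix.unitaryGroup (Fin n) ℂ)) :=
      continuous_induced_dom
    have h2 := (continuous_apply z₀).comp h1
    have h3 := continuous_subtype_val.comp h2
    exact h3.matrix_trace
  have hmem : ∀ ρ : Heisenberg →* Matrix.unitaryGroup (Fin n) ℂ, g ρ ∈ S := by
    intro ρ
    set A : Matrix (Fin n) (Fin n) ℂ := (ρ z₀ : Matrix (Fin n) (Fin n) ℂ) with hA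
    set U : Matrix (Fin n) (Fin n) ℂ := (ρ x₀ : Matrix (Fin n) (Fin n) ℂ) with hU
    set V : Matrix (Fin n) (Fin n) ℂ := (ρ y₀ : Matrix (Fin n) (Fin n) ℂ) with hV
    have hAU : A * U = U * A := by
      have h := congrArg (Subtype.val) (by rw [← _root_.map_mul, e1, _root_.map_mul] :
        ρ z₀ * ρ x₀ = ρ x₀ * ρ z₀)
      simpa using h
    have hAV : A * V = V * A := by
      have h := congrArg (Subtype.val) (by rw [← _root_.map_mul, e2, _root_.map_mul] :
        ρ z₀ * ρ y₀ = ρ y₀ * ρ z₀)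
      simpa using h
    have hrel : U * V = A * (V * U) := by
      have h := congrArg (Subtype.val) (by rw [← _root_.map_mul, e3, _root_.map_mul, _root_.map_mul] :
        ρ x₀ * ρ y₀ = ρ z₀ * (ρ y₀ * ρ x₀))
      simpa using h
    have hUu : IsUnit U := ⟨Unitary.toUnits (ρ x₀), rfl⟩
    have hVu : IsUnit V := ⟨Unitary.toUnits (ρ y₀), rfl⟩
    have hroots : ∀ μ ∈ A.charpoly.roots, μ ^ N = 1 := by
      intro μ hμ
      obtain ⟨w, hw0, hw⟩ := exists_eigenvector_of_root hμ
      exact eig_pow_factorial_eq_one hUu hVu hAU hAV hrel hw0 hw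
    have hcard : A.charpoly.roots.card = n := by
      have hs := Polynomial.splits_iff_card_roots.mp
        (IsAlgClosed.splits A.charpoly)
      rwa [Matrix.charpoly_natDegree_eq_dim, Fintype.card_fin] at hs
    set l := A.charpoly.roots.toList with hl
    have hlen : l.length = n := by rw [hl, Multiset.length_toList, hcard]
    set fvec : Fin n → ℂ := fun i => l.get (Fin.cast hlen.symm i) with hfvec
    have hmemR : ∀ i, fvec i ∈ Polynomial.nthRootsFinset N (1 : ℂ) := by
      intro i
      have hin : fvec i ∈ A.charpoly.roots := by
        rw [← Multiset.mem_toList]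
        exact List.get_mem _ _
      exact (Polynomial.mem_nthRootsFinset hN 1).mpr (hroots _ hin)
    have hsum2 : ∑ i, fvec i = l.sum := by
      have h1 : l.sum = ∑ j : Fin l.length, l.get j := by
        conv_lhs => rw [← List.ofFn_get l]
        rw [List.sum_ofFn]
      rw [h1]
      exact Fintype.sum_equiv (finCongr hlen.symm) _ _ (fun i => by rw [finCongr_apply])
    have htrace : g ρ = ∑ i, fvec i := by
      rw [hgdef]
      show Matrix.trace A = _
      rw [Matrix.trace_eq_sum_roots_charpoly, hsum2, hl, Multiset.sum_toList]
    rw [htrace, hSdef]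
    exact ⟨fvec, by intro i _; exact hmemR i, rfl⟩
  -- the two representations
  obtain ⟨xU, yU, zU, hzx, hzy, hxy, htr⟩ := exists_unitaries n hn
  set σ : Heisenberg →* Matrix.unitaryGroup (Fin n) ℂ :=
    MonoidHom.mk' (fun w => yU ^ w.b * xU ^ w.a * zU ^ w.c)
      (by
        intro v w
        simp only [Heisenberg.mul_a, Heisenberg.mul_b, Heisenberg.mul_c]
        exact (heis_hom_mul hzx hzy hxy (heis_zpow hzx hzy hxy)
          v.a v.b v.c w.a w.b w.c).symm) with hσ
  haveI : Finite ↥S := hSfin.to_subtype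
  have hconst := IsPreconnected.constant_of_mapsTo (T := S) isPreconnected_univ
    hSfin.isDiscrete hcont.continuousOn (fun ρ _ => hmem ρ)
    (Set.mem_univ (1 : Heisenberg →* Matrix.unitaryGroup (Fin n) ℂ))
    (Set.mem_univ σ)
  have hg1 : g 1 = (n : ℂ) := by
    rw [hgdef]
    show Matrix.trace (((1 : Heisenberg →* Matrix.unitaryGroup (Fin n) ℂ) z₀ :
      Matrix (Fin n) (Fin n) ℂ)) = (n : ℂ)
    simp [Matrix.trace_one]
  have hgσ : g σ = (n : ℂ) - 4 := by
    rw [hgdef]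
    have hz : σ z₀ = zU := by
      show yU ^ (z₀.b) * xU ^ (z₀.a) * zU ^ (z₀.c) = zU
      have ha : z₀.a = 0 := rfl
      have hb : z₀.b = 0 := rfl
      have hc : z₀.c = 1 := rfl
      rw [ha, hb, hc]
      simp
    show Matrix.trace ((σ z₀ : Matrix (Fin n) (Fin n) ℂ)) = (n : ℂ) - 4
    rw [hz]
    exact htr
  rw [hg1, hgσ] at hconst
  have : (4 : ℂ) = 0 := by linear_combination hconst
  norm_num at this
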